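/- Let G^X = (V, E^X, s) be an extraction order of a directed graph G whose underlying undirected graph is a cactus graph (every two distinct simple cycles share at most one vertex). Then for every edge e ∈ E^X, the label set of e has cardinality at most 1. Consequently, the extraction width of G^X (one plus the maximal number of labels in any edge bag) is at most 2. -/

import Mathlib

/-- The list of consecutive edges traversed by a path given as a list of vertices. -/
def pathEdges {V : Type*} (p : List V) : List (V × V) := p.zip p.tail

/-- A (simple) directed path from `a` to `b` in the edge set `E`, given as the
nonempty list of visited vertices. -/
def IsPath {V : Type*} (E : Finset (V × V)) (a b : V) (p : List V) : Prop :=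
  p ≠ [] ∧ p.head? = some a ∧ p.getLast? = some b ∧ p.Nodup ∧
    ∀ e ∈ pathEdges p, e ∈ E

/-- An extraction order: a rooted DAG in which every vertex is reachable from the root. -/
structure ExtractionOrder (V : Type*) where
  E : Finset (V × V)
  root : V
  reach : ∀ v : V, ∃ p : List V, IsPath E root v p
  acyclic : ∀ u v : V, (u, v) ∈ E → ¬ ∃ p : List V, IsPath E v u p

/-- A confluence from `i` to `j`: two distinct directed paths from `i` to `j`
that are vertex-disjoint except at their shared endpoints. -/
def IsConfluence {V : Type*} (E : Finset (V × V)) (i j : V) (p₁ p₂ : List V) : Prop :=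
  i ≠ j ∧ p₁ ≠ p₂ ∧ IsPath E i j p₁ ∧ IsPath E i j p₂ ∧
    ∀ v, v ∈ p₁ → v ∈ p₂ → v = i ∨ v = j

/-- The edge `e` is labeled with `j` iff some confluence with target `j` contains `e`. -/
def IsLabeled {V : Type*} (E : Finset (V × V)) (e : V × V) (j : V) : Prop :=
  ∃ i p₁ p₂, IsConfluence E i j p₁ p₂ ∧ (e ∈ pathEdges p₁ ∨ e ∈ pathEdges p₂)

/-- The edge `e` lies on some directed path from `i` to `j`. -/
def OnPath {V : Type*} (E : Finset (V × V)) (i j : V) (e : V × V) : Prop :=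
  ∃ p, IsPath E i j p ∧ e ∈ pathEdges p

/-- The label set of an edge. -/
def labelSet {V : Type*} (E : Finset (V × V)) (e : V × V) : Set V :=
  {j | IsLabeled E e j}

/-- Two edges lie in the same edge bag (of the common tail `e.1`) iff they are linked by a
chain of outgoing edges of `e.1` with pairwise intersecting label sets. -/
def inSameBag {V : Type*} (E : Finset (V × V)) (e e' : V × V) : Prop :=
  Relation.ReflTransGen
    (fun a b => a ∈ E ∧ b ∈ E ∧ a.1 = e.1 ∧ b.1 = e.1 ∧
      (labelSet E a ∩ labelSet E b).Nonempty) e e'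

/-- The union of the label sets of the edges in the bag of `e`. -/
def bagLabels {V : Type*} (E : Finset (V × V)) (e : V × V) : Set V :=
  {j | ∃ e', inSameBag E e e' ∧ IsLabeled E e' j}

/-- The width of an extraction order: one plus the maximal number of labels in any edge bag. -/
noncomputable def widthX {V : Type*} (X : ExtractionOrder V) : ℕ :=
  1 + X.E.sup (fun e => (bagLabels X.E e).ncard)

/-- `EX` is obtained from `E` by possibly reversing the orientation of some edges. -/
def IsOrientationOf {V : Type*} (EX E : Finset (V × V)) : Prop :=
  (∀ u v : V, (u, v) ∈ EX → (u, v) ∈ E ∨ (v, u) ∈ E) ∧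
  (∀ u v : V, (u, v) ∈ E → (u, v) ∈ EX ∨ (v, u) ∈ EX)

/-- The extraction width of a directed graph: the minimum width over all its extraction orders. -/
noncomputable def extractionWidth {V : Type*} (E : Finset (V × V)) : ℕ :=
  sInf {w | ∃ X : ExtractionOrder V, IsOrientationOf X.E E ∧ widthX X = w}

/-- The underlying undirected simple graph of a directed edge set. -/
def underlying {V : Type*} (E : Finset (V × V)) : SimpleGraph V where
  Adj u v := u ≠ v ∧ ((u, v) ∈ E ∨ (v, u) ∈ E)
  symm := ⟨by intro u v h; exact ⟨h.1.symm, h.2.elim Or.inr Or.inl⟩⟩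
  loopless := ⟨by intro u h; exact h.1 rfl⟩

/-- A cactus graph: a connected graph in which any two distinct simple cycles share at
most one vertex. -/
def IsCactus {V : Type*} [DecidableEq V] (G : SimpleGraph V) : Prop :=
  G.Connected ∧
    ∀ (u v : V) (c : G.Walk u u) (c' : G.Walk v v), c.IsCycle → c'.IsCycle →
      c.edges.toFinset ≠ c'.edges.toFinset →
        ∀ a b : V, a ∈ c.support → a ∈ c'.support → b ∈ c.support → b ∈ c'.support → a = b

section Aux
variable {V : Type*}

lemma pathEdges_nil : pathEdges ([] : List V) = [] := rfl
lemma pathEdges_single (a : V) : pathEdges [a] = [] := rfl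
lemma pathEdges_cons_cons (a b : V) (r : List V) :
    pathEdges (a :: b :: r) = (a, b) :: pathEdges (b :: r) := rfl

lemma pathEdges_mem : ∀ (p : List V) (e : V × V), e ∈ pathEdges p → e.1 ∈ p ∧ e.2 ∈ p
  | [], e, h => by simp [pathEdges_nil] at h
  | [a], e, h => by simp [pathEdges_single] at h
  | a :: b :: r, e, h => by
    rw [pathEdges_cons_cons] at h
    rcases List.mem_cons.1 h with h | h
    · subst h; simp
    · have := pathEdges_mem (b :: r) e h
      exact ⟨List.mem_cons_of_mem _ this.1, List.mem_cons_of_mem _ this.2⟩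

lemma mem_of_getLast'' {l : List V} {x : V} (h : l.getLast? = some x) : x ∈ l := by
  obtain ⟨h', rfl⟩ := List.mem_getLast?_eq_getLast (Option.mem_def.2 h)
  exact List.getLast_mem h'

lemma pathEdges_snd_mem_tail {p : List V} {e : V × V} (h : e ∈ pathEdges p) : e.2 ∈ p.tail :=
  (List.of_mem_zip h).2

/-- no in-edge to the head of a nodup list -/
lemma no_in_head {p : List V} {i : V} (hnd : p.Nodup) (hh : p.head? = some i)
    (w : V) : (w, i) ∉ pathEdges p := by
  intro h
  have h2 := pathEdges_snd_mem_tail h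
  cases p with
  | nil => simp at hh
  | cons a t =>
    simp at hh
    subst hh
    exact (List.nodup_cons.1 hnd).1 h2

/-- no out-edge from the last of a nodup list -/
lemma no_out_last : ∀ (p : List V), p.Nodup → ∀ j : V, p.getLast? = some j →
    ∀ w, (j, w) ∉ pathEdges p
  | [], _, j, hj, w => by simp at hj
  | [a], _, j, hj, w => by simp [pathEdges_single]
  | a :: b :: r, hnd, j, hj, w => by
    rw [List.getLast?_cons_cons] at hj
    intro h
    rw [pathEdges_cons_cons, List.mem_cons] at h
    rcases h with h | h
    · have : j = a := congrArg Prod.fst h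
      subst this
      exact (List.nodup_cons.1 hnd).1 (mem_of_getLast'' hj)
    · exact no_out_last (b :: r) (List.nodup_cons.1 hnd).2 j hj w h

lemma exists_out_edge : ∀ (p : List V) (v : V), v ∈ p → ∀ j : V, p.getLast? = some j →
    v ≠ j → ∃ w, (v, w) ∈ pathEdges p
  | [], v, hv, _, _, _ => by simp at hv
  | [a], v, hv, j, hj, hvj => by
    simp at hv hj; exact absurd (hv.trans hj) hvj
  | a :: b :: r, v, hv, j, hj, hvj => by
    rw [List.getLast?_cons_cons] at hj
    rcases List.mem_cons.1 hv with h | h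
    · exact ⟨b, by rw [pathEdges_cons_cons]; subst h; exact List.mem_cons_self⟩
    · obtain ⟨w, hw⟩ := exists_out_edge (b :: r) v h j hj hvj
      exact ⟨w, by rw [pathEdges_cons_cons]; exact List.mem_cons_of_mem _ hw⟩

lemma exists_in_edge : ∀ (p : List V) (v : V), v ∈ p.tail → ∃ w, (w, v) ∈ pathEdges p
  | [], v, hv => by simp at hv
  | [a], v, hv => by simp at hv
  | a :: b :: r, v, hv => by
    simp only [List.tail_cons] at hv
    rcases List.mem_cons.1 hv with h | h
    · exact ⟨a, by rw [pathEdges_cons_cons]; subst h; exact List.mem_cons_self⟩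
    · obtain ⟨w, hw⟩ := exists_in_edge (b :: r) v h
      exact ⟨w, by rw [pathEdges_cons_cons]; exact List.mem_cons_of_mem _ hw⟩

lemma pathEdges_ne : ∀ (p : List V), p.Nodup → ∀ e ∈ pathEdges p, e.1 ≠ e.2
  | [], _, e, he => by simp [pathEdges_nil] at he
  | [a], _, e, he => by simp [pathEdges_single] at he
  | a :: b :: r, hnd, e, he => by
    rw [pathEdges_cons_cons, List.mem_cons] at he
    rcases he with he | he
    · subst he
      intro h
      apply (List.nodup_cons.1 hnd).1
      rw [show a = b from h]
      exact List.mem_cons_self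
    · exact pathEdges_ne (b :: r) (List.nodup_cons.1 hnd).2 e he

lemma last_eq_of_singleton : ∀ (r : List V) (b : V), (b :: r).getLast? = some b → b ∉ r → r = []
  | [], b, _, _ => rfl
  | c :: r', b, h, hb => by
    rw [List.getLast?_cons_cons] at h
    exact absurd (mem_of_getLast'' h) hb

lemma eq_pair {p : List V} {i j : V} (hnd : p.Nodup) (hh : p.head? = some i)
    (hl : p.getLast? = some j) (he : (i, j) ∈ pathEdges p) : p = [i, j] := by
  match p with
  | [] => simp at hh
  | [a] => simp [pathEdges_single] at he
  | a :: b :: r =>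
    simp only [List.head?_cons, Option.some.injEq] at hh
    subst hh
    rw [pathEdges_cons_cons, List.mem_cons] at he
    rw [List.getLast?_cons_cons] at hl
    rcases he with he | he
    · have hjb : j = b := (Prod.mk.injEq _ _ _ _ ▸ he).2
      subst hjb
      have hr : r = [] :=
        last_eq_of_singleton r j hl (List.nodup_cons.1 (List.nodup_cons.1 hnd).2).1
      rw [hr]
    · exact absurd (pathEdges_mem _ _ he).1 (List.nodup_cons.1 hnd).1

end Aux
section Walks
variable {V : Type*}
open SimpleGraph

def mkWalk (G : SimpleGraph V) : ∀ (a : V) (p : List V) (b : V),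
    List.Chain' G.Adj (a :: (p ++ [b])) → G.Walk a b
  | a, [], b, h => Walk.cons (List.isChain_cons_cons.1 h).1 Walk.nil
  | a, c :: p, b, h =>
    Walk.cons (List.isChain_cons_cons.1 h).1 (mkWalk G c p b (List.isChain_cons_cons.1 h).2)

lemma mkWalk_support (G : SimpleGraph V) : ∀ (a : V) (p : List V) (b : V)
    (h : List.Chain' G.Adj (a :: (p ++ [b]))),
    (mkWalk G a p b h).support = a :: (p ++ [b])
  | a, [], b, h => rfl
  | a, c :: p, b, h => by
    show a :: (mkWalk G c p b _).support = _
    erw [mkWalk_support G c p b]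
    rfl

lemma mkWalk_edges (G : SimpleGraph V) : ∀ (a : V) (p : List V) (b : V)
    (h : List.Chain' G.Adj (a :: (p ++ [b]))),
    (mkWalk G a p b h).edges = (pathEdges (a :: (p ++ [b]))).map (Function.uncurry Sym2.mk)
  | a, [], b, h => rfl
  | a, c :: p, b, h => by
    show s(a, c) :: (mkWalk G c p b _).edges = _
    erw [mkWalk_edges G c p b]
    rfl

lemma chain'_of_pathEdges {R : V → V → Prop} :
    ∀ (p : List V), (∀ e ∈ pathEdges p, R e.1 e.2) → p.Chain' R
  | [], _ => List.isChain_nil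
  | [a], _ => List.isChain_singleton a
  | a :: b :: r, h => by
    show List.IsChain R (a :: b :: r)
    rw [List.isChain_cons_cons]
    refine ⟨h (a, b) (by rw [pathEdges_cons_cons]; exact List.mem_cons_self), ?_⟩
    exact chain'_of_pathEdges (b :: r) fun e he =>
      h e (by rw [pathEdges_cons_cons]; exact List.mem_cons_of_mem _ he)

lemma isPath_structure {E : Finset (V × V)} {i j : V} {p : List V}
    (hP : IsPath E i j p) (hij : i ≠ j) : ∃ m : List V, p = i :: (m ++ [j]) := by
  obtain ⟨hne, hh, hl, hnd, hE⟩ := hP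
  match p with
  | [] => simp at hh
  | [a] =>
    simp at hh hl
    exact absurd (hh.symm.trans hl) hij
  | a :: b :: r =>
    simp only [List.head?_cons, Option.some.injEq] at hh
    subst hh
    have hbr : (b :: r) ≠ [] := by simp
    refine ⟨(b :: r).dropLast, ?_⟩
    rw [List.getLast?_cons_cons, List.getLast?_eq_getLast_of_ne_nil hbr,
      Option.some.injEq] at hl
    have := List.dropLast_append_getLast hbr
    rw [hl] at this
    rw [this]

lemma exists_walk {E : Finset (V × V)} {i j : V} {p : List V}
    (hP : IsPath E i j p) (hij : i ≠ j) :
    ∃ w : (underlying E).Walk i j, w.support = p ∧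
      w.edges = (pathEdges p).map (Function.uncurry Sym2.mk) := by
  obtain ⟨m, rfl⟩ := isPath_structure hP hij
  have hch : List.Chain' (underlying E).Adj (i :: (m ++ [j])) :=
    chain'_of_pathEdges _ fun e he =>
      ⟨pathEdges_ne _ hP.2.2.2.1 e he, Or.inl (by
        have := hP.2.2.2.2 e he
        exact (show ((e.1, e.2) ∈ E) from by simpa using this))⟩
  exact ⟨mkWalk _ i m j hch, mkWalk_support _ i m j hch, mkWalk_edges _ i m j hch⟩

end Walks
section Cycle
variable {V : Type*}
open SimpleGraph

lemma sym2_pathEdges_nodup : ∀ (p : List V), p.Nodup → ((pathEdges p).map (Function.uncurry Sym2.mk)).Nodup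
  | [], _ => List.nodup_nil
  | [a], _ => List.nodup_nil
  | a :: b :: r, hnd => by
    rw [pathEdges_cons_cons, List.map_cons, List.nodup_cons]
    refine ⟨?_, sym2_pathEdges_nodup (b :: r) (List.nodup_cons.1 hnd).2⟩
    intro hmem
    obtain ⟨e, he, heq⟩ := List.mem_map.1 hmem
    have : e = (a, b) ∨ e = (b, a) := by
      rcases e with ⟨x, y⟩
      simp only [Function.uncurry_apply_pair] at heq
      rw [Sym2.mk_eq_mk_iff (p := (x, y)) (q := (a, b))] at heq
      rcases heq with h | h
      · exact Or.inl h
      · exact Or.inr (by simpa [Prod.swap] using h)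
    have ha : a ∈ b :: r := by
      rcases this with rfl | rfl
      · exact (pathEdges_mem _ _ he).1
      · exact (pathEdges_mem _ _ he).2
    exact (List.nodup_cons.1 hnd).1 ha

lemma confluence_edge_disjoint {E : Finset (V × V)} {i j : V} {p₁ p₂ : List V}
    (hconf : IsConfluence E i j p₁ p₂) :
    ∀ e₁ ∈ pathEdges p₁, ∀ e₂ ∈ pathEdges p₂, Function.uncurry Sym2.mk e₁ ≠ Function.uncurry Sym2.mk e₂ := by
  obtain ⟨hij, hne, hP1, hP2, hdisj⟩ := hconf
  intro e₁ he₁ e₂ he₂ heq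
  have hswap : e₂ = e₁ ∨ e₂ = e₁.swap := by
    rcases e₁ with ⟨x, y⟩; rcases e₂ with ⟨z, w⟩
    simp only [Function.uncurry_apply_pair] at heq
    rw [Sym2.mk_eq_mk_iff (p := (x, y)) (q := (z, w))] at heq
    rcases heq with h | h
    · exact Or.inl h.symm
    · exact Or.inr (by simp [Prod.swap] at h ⊢; exact ⟨h.2.symm, h.1.symm⟩)
  -- endpoints of e₁ lie in both paths
  have h1 : e₁.1 ∈ p₁ ∧ e₁.2 ∈ p₁ := pathEdges_mem _ _ he₁
  have h2 : e₁.1 ∈ p₂ ∧ e₁.2 ∈ p₂ := by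
    have := pathEdges_mem _ _ he₂
    rcases hswap with rfl | rfl
    · exact this
    · exact ⟨this.2, this.1⟩
  have hx := hdisj e₁.1 h1.1 h2.1
  have hy := hdisj e₁.2 h1.2 h2.2
  have hne12 : e₁.1 ≠ e₁.2 := pathEdges_ne _ hP1.2.2.2.1 e₁ he₁
  have he₁ij : e₁ = (i, j) := by
    rcases hx with hx | hx <;> rcases hy with hy | hy
    · exact absurd (hx.trans hy.symm) hne12
    · exact Prod.ext hx hy
    · exfalso
      apply no_out_last p₁ hP1.2.2.2.1 j hP1.2.2.1 e₁.2
      have hrw : e₁ = (j, e₁.2) := Prod.ext hx rfl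
      rw [← hrw]
      exact he₁
    · exact absurd (hx.trans hy.symm) hne12
  have he₂ij : e₂ = (i, j) := by
    rcases hswap with rfl | rfl
    · exact he₁ij
    · rw [he₁ij] at he₂
      exact absurd he₂ (no_out_last p₂ hP2.2.2.2.1 j hP2.2.2.1 i)
  rw [he₁ij] at he₁
  rw [he₂ij] at he₂
  have := eq_pair hP1.2.2.2.1 hP1.2.1 hP1.2.2.1 he₁
  have := eq_pair hP2.2.2.2.1 hP2.2.1 hP2.2.2.1 he₂
  exact hne (by simp_all)

lemma exists_cycle {E : Finset (V × V)} {i j : V} {p₁ p₂ : List V}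
    (hconf : IsConfluence E i j p₁ p₂) :
    ∃ c : (underlying E).Walk i i, c.IsCycle ∧
      (∀ v, v ∈ p₁ ∨ v ∈ p₂ → v ∈ c.support) ∧
      c.edges = (pathEdges p₁).map (Function.uncurry Sym2.mk) ++ ((pathEdges p₂).map (Function.uncurry Sym2.mk)).reverse := by
  have hedisj := confluence_edge_disjoint hconf
  obtain ⟨hij, hne, hP1, hP2, hdisj⟩ := hconf
  obtain ⟨w₁, hs₁, he₁⟩ := exists_walk hP1 hij
  obtain ⟨w₂, hs₂, he₂⟩ := exists_walk hP2 hij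
  have hedg : (w₁.append w₂.reverse).edges =
      (pathEdges p₁).map (Function.uncurry Sym2.mk) ++ ((pathEdges p₂).map (Function.uncurry Sym2.mk)).reverse := by
    rw [Walk.edges_append, Walk.edges_reverse, he₁, he₂]
  have hsup : (w₁.append w₂.reverse).support = p₁ ++ p₂.reverse.tail := by
    rw [Walk.support_append, Walk.support_reverse, hs₁, hs₂]
  have hrevhead : p₂.reverse.head? = some j := by
    rw [List.head?_reverse]; exact hP2.2.2.1
  have hrevcons : j :: p₂.reverse.tail = p₂.reverse :=
    List.cons_head?_tail (Option.mem_def.2 hrevhead)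
  have hmem2 : ∀ v ∈ p₂.reverse.tail, v ∈ p₂ := fun v hv =>
    List.mem_reverse.1 (by rw [← hrevcons]; exact List.mem_cons_of_mem _ hv)
  have hjnot : j ∉ p₂.reverse.tail := by
    have : p₂.reverse.Nodup := List.nodup_reverse.2 hP2.2.2.2.1
    rw [← hrevcons] at this
    exact (List.nodup_cons.1 this).1
  obtain ⟨m, hm⟩ := isPath_structure hP1 hij
  have hpE1 : pathEdges p₁ ≠ [] := by
    rw [hm]; cases m with
    | nil => simp [pathEdges_cons_cons]
    | cons x m' => simp [pathEdges_cons_cons]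
  refine ⟨w₁.append w₂.reverse, ⟨⟨⟨?_⟩, ?_⟩, ?_⟩, ?_, hedg⟩
  · -- edges nodup
    rw [hedg, List.nodup_append]
    refine ⟨sym2_pathEdges_nodup p₁ hP1.2.2.2.1,
      List.nodup_reverse.2 (sym2_pathEdges_nodup p₂ hP2.2.2.2.1), ?_⟩
    intro a ha b ha' hab
    rw [← hab] at ha'
    rw [List.mem_reverse] at ha'
    obtain ⟨f₁, hf₁, rfl⟩ := List.mem_map.1 ha
    obtain ⟨f₂, hf₂, hfe⟩ := List.mem_map.1 ha'
    exact hedisj f₁ hf₁ f₂ hf₂ hfe.symm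
  · -- ne nil
    intro h
    apply hpE1
    have : (w₁.append w₂.reverse).edges = [] := by rw [h]; rfl
    rw [hedg] at this
    have := (List.append_eq_nil_iff.1 this).1
    exact List.map_eq_nil_iff.1 this
  · -- support tail nodup
    rw [hsup, hm]
    rw [List.cons_append, List.tail_cons]
    rw [List.nodup_append]
    have hnd1 : p₁.Nodup := hP1.2.2.2.1
    rw [hm, List.nodup_cons] at hnd1
    refine ⟨hnd1.2, ?_, ?_⟩
    · have : p₂.reverse.Nodup := List.nodup_reverse.2 hP2.2.2.2.1
      rw [← hrevcons] at this
      exact (List.nodup_cons.1 this).2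
    · intro v hv v' hv' hvv
      rw [← hvv] at hv'
      have hv1 : v ∈ p₁ := by rw [hm]; exact List.mem_cons_of_mem _ hv
      have hv2 : v ∈ p₂ := hmem2 v hv'
      rcases hdisj v hv1 hv2 with rfl | rfl
      · exact hnd1.1 hv
      · exact hjnot hv'
  · -- support membership
    intro v hv
    rw [hsup, List.mem_append]
    rcases hv with hv | hv
    · exact Or.inl hv
    · have : v ∈ p₂.reverse := List.mem_reverse.2 hv
      rw [← hrevcons, List.mem_cons] at this
      rcases this with rfl | h
      · exact Or.inl (mem_of_getLast'' hP1.2.2.1)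
      · exact Or.inr h

end Cycle
section Main
variable {V : Type*}
open SimpleGraph

lemma no_loop (X : ExtractionOrder V) (u : V) : (u, u) ∉ X.E := fun h =>
  X.acyclic u u h ⟨[u], by simp, by simp, by simp, List.nodup_singleton u,
    by simp [pathEdges_single]⟩

lemma no_two (X : ExtractionOrder V) {u v : V} (h1 : (u, v) ∈ X.E) (h2 : (v, u) ∈ X.E) :
    False := by
  rcases eq_or_ne u v with rfl | hne
  · exact no_loop X u h1
  · refine X.acyclic u v h1 ⟨[v, u], by simp, by simp, by simp, ?_, ?_⟩
    · simp [Ne.symm hne]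
    · intro f hf
      have : f = (v, u) := by
        rw [pathEdges_cons_cons, pathEdges_single] at hf
        simpa using hf
      rw [this]; exact h2

lemma underlying_eq {EX E : Finset (V × V)} (hX : IsOrientationOf EX E) :
    underlying EX = underlying E := by
  ext u v
  constructor
  · rintro ⟨hne, h | h⟩
    · exact ⟨hne, hX.1 u v h⟩
    · exact ⟨hne, (hX.1 v u h).elim Or.inr Or.inl⟩
  · rintro ⟨hne, h | h⟩
    · exact ⟨hne, hX.2 u v h⟩
    · exact ⟨hne, (hX.2 v u h).elim Or.inr Or.inl⟩

lemma label_unique [DecidableEq V] {EX : Finset (V × V)} (hc : IsCactus (underlying EX))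
    (hnl : ∀ u v : V, (u, v) ∈ EX → (v, u) ∈ EX → False) {e : V × V} {j j' : V}
    (h : IsLabeled EX e j) (h' : IsLabeled EX e j') : j = j' := by
  obtain ⟨i, p₁, p₂, hconf, he⟩ := h
  obtain ⟨i', q₁, q₂, hconf', he'⟩ := h'
  obtain ⟨c, hcyc, hcs, hce⟩ := exists_cycle hconf
  obtain ⟨c', hcyc', hcs', hce'⟩ := exists_cycle hconf'
  obtain ⟨hij, hnep, hP1, hP2, hdisj⟩ := hconf
  obtain ⟨hij', hneq, hQ1, hQ2, hdisj'⟩ := hconf'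
  have hend1 : e.1 ∈ p₁ ∨ e.1 ∈ p₂ :=
    he.imp (fun h => (pathEdges_mem _ _ h).1) (fun h => (pathEdges_mem _ _ h).1)
  have hend2 : e.2 ∈ p₁ ∨ e.2 ∈ p₂ :=
    he.imp (fun h => (pathEdges_mem _ _ h).2) (fun h => (pathEdges_mem _ _ h).2)
  have hend1' : e.1 ∈ q₁ ∨ e.1 ∈ q₂ :=
    he'.imp (fun h => (pathEdges_mem _ _ h).1) (fun h => (pathEdges_mem _ _ h).1)
  have hend2' : e.2 ∈ q₁ ∨ e.2 ∈ q₂ :=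
    he'.imp (fun h => (pathEdges_mem _ _ h).2) (fun h => (pathEdges_mem _ _ h).2)
  have hne12 : e.1 ≠ e.2 := by
    rcases he with h | h
    · exact pathEdges_ne _ hP1.2.2.2.1 e h
    · exact pathEdges_ne _ hP2.2.2.2.1 e h
  have hEq : c.edges.toFinset = c'.edges.toFinset := by
    by_contra hEF
    exact hne12 (hc.2 i i' c c' hcyc hcyc' hEF e.1 e.2
      (hcs _ hend1) (hcs' _ hend1') (hcs _ hend2) (hcs' _ hend2'))
  have hmemiff : ∀ s : Sym2 V, s ∈ c.edges ↔ s ∈ c'.edges := fun s => by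
    rw [← List.mem_toFinset, ← List.mem_toFinset, hEq]
  -- directed transfer between the two cycles
  have key : ∀ (r₁ r₂ t₁ t₂ : List V),
      (∀ s : Sym2 V, s ∈ (pathEdges r₁).map (Function.uncurry Sym2.mk) ++ ((pathEdges r₂).map (Function.uncurry Sym2.mk)).reverse →
        s ∈ (pathEdges t₁).map (Function.uncurry Sym2.mk) ++ ((pathEdges t₂).map (Function.uncurry Sym2.mk)).reverse) →
      (∀ f ∈ pathEdges r₁, f ∈ EX) → (∀ f ∈ pathEdges r₂, f ∈ EX) →
      (∀ f ∈ pathEdges t₁, f ∈ EX) → (∀ f ∈ pathEdges t₂, f ∈ EX) →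
      ∀ f, (f ∈ pathEdges r₁ ∨ f ∈ pathEdges r₂) →
        (f ∈ pathEdges t₁ ∨ f ∈ pathEdges t₂) := by
    intro r₁ r₂ t₁ t₂ hiff hr₁ hr₂ ht₁ ht₂ f hf
    have hfX : f ∈ EX := hf.elim (hr₁ f) (hr₂ f)
    have hmem : Function.uncurry Sym2.mk f ∈ (pathEdges t₁).map (Function.uncurry Sym2.mk) ++
        ((pathEdges t₂).map (Function.uncurry Sym2.mk)).reverse := by
      apply hiff
      rw [List.mem_append]
      rcases hf with h | h
      · exact Or.inl (List.mem_map_of_mem h)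
      · exact Or.inr (List.mem_reverse.2 (List.mem_map_of_mem h))
    rw [List.mem_append] at hmem
    have hg : ∃ g, (g ∈ pathEdges t₁ ∨ g ∈ pathEdges t₂) ∧ Function.uncurry Sym2.mk g = Function.uncurry Sym2.mk f := by
      rcases hmem with h | h
      · obtain ⟨g, hg, hgeq⟩ := List.mem_map.1 h
        exact ⟨g, Or.inl hg, hgeq⟩
      · obtain ⟨g, hg, hgeq⟩ := List.mem_map.1 (List.mem_reverse.1 h)
        exact ⟨g, Or.inr hg, hgeq⟩
    obtain ⟨g, hgmem, hgeq⟩ := hg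
    have hgf : g = f ∨ g = f.swap := by
      rcases g with ⟨x, y⟩; rcases f with ⟨z, w⟩
      simp only [Function.uncurry_apply_pair] at hgeq
      rw [Sym2.mk_eq_mk_iff (p := (x, y)) (q := (z, w))] at hgeq
      rcases hgeq with h | h
      · exact Or.inl h
      · exact Or.inr (by simpa [Prod.swap] using h)
    rcases hgf with rfl | hgf
    · exact hgmem
    · -- g = f.swap : both f and f.swap in EX, contradiction
      exfalso
      have hgX : g ∈ EX := hgmem.elim (ht₁ g) (ht₂ g)
      have hfs : (f.2, f.1) ∈ EX := by
        have : g = (f.2, f.1) := hgf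
        rw [← this]; exact hgX
      exact hnl f.1 f.2 hfX hfs
  have hD : ∀ f, (f ∈ pathEdges p₁ ∨ f ∈ pathEdges p₂) →
      (f ∈ pathEdges q₁ ∨ f ∈ pathEdges q₂) := by
    apply key
    · intro s hs
      rw [← hce', ← hmemiff s, hce]
      exact hs
    · exact hP1.2.2.2.2
    · exact hP2.2.2.2.2
    · exact hQ1.2.2.2.2
    · exact hQ2.2.2.2.2
  have hD' : ∀ f, (f ∈ pathEdges q₁ ∨ f ∈ pathEdges q₂) →
      (f ∈ pathEdges p₁ ∨ f ∈ pathEdges p₂) := by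
    apply key
    · intro s hs
      rw [← hce, hmemiff s, hce']
      exact hs
    · exact hQ1.2.2.2.2
    · exact hQ2.2.2.2.2
    · exact hP1.2.2.2.2
    · exact hP2.2.2.2.2
  by_contra hjj
  obtain ⟨m', hm'⟩ := isPath_structure hQ1 hij'
  have hj'tail : j' ∈ q₁.tail := by rw [hm']; simp
  obtain ⟨w, hw⟩ := exists_in_edge q₁ j' hj'tail
  have hwD : (w, j') ∈ pathEdges p₁ ∨ (w, j') ∈ pathEdges p₂ := hD' _ (Or.inl hw)
  have hout : ∃ w', (j', w') ∈ pathEdges p₁ ∨ (j', w') ∈ pathEdges p₂ := by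
    rcases hwD with h | h
    · have hj'p : j' ∈ p₁ := by
        have := (pathEdges_mem _ _ h).2
        exact this
      obtain ⟨w', hw'⟩ := exists_out_edge p₁ j' hj'p j hP1.2.2.1 (Ne.symm hjj)
      exact ⟨w', Or.inl hw'⟩
    · have hj'p : j' ∈ p₂ := by
        have := (pathEdges_mem _ _ h).2
        exact this
      obtain ⟨w', hw'⟩ := exists_out_edge p₂ j' hj'p j hP2.2.2.1 (Ne.symm hjj)
      exact ⟨w', Or.inr hw'⟩
  obtain ⟨w', hw'⟩ := hout
  rcases hD _ hw' with h | h
  · exact no_out_last q₁ hQ1.2.2.2.1 j' hQ1.2.2.1 w' h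
  · exact no_out_last q₂ hQ2.2.2.2.1 j' hQ2.2.2.1 w' h

end Main
/-- For an extraction order of a directed graph whose underlying undirected
graph is a cactus, every edge has at most one label; hence the width is at most 2. -/
theorem stmt3 {V : Type*} [DecidableEq V] (E : Finset (V × V))
    (hc : IsCactus (underlying E))
    (X : ExtractionOrder V) (hX : IsOrientationOf X.E E) :
    (∀ e ∈ X.E, (labelSet X.E e).Subsingleton) ∧ widthX X ≤ 2 := by
  have hnl : ∀ u v : V, (u, v) ∈ X.E → (v, u) ∈ X.E → False := fun u v h1 h2 =>
    no_two X h1 h2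
  have hc' : IsCactus (underlying X.E) := by rw [underlying_eq hX]; exact hc
  have hsub : ∀ e : V × V, (labelSet X.E e).Subsingleton := by
    intro e j hj j' hj'
    exact label_unique hc' hnl hj hj'
  refine ⟨fun e _ => hsub e, ?_⟩
  have hbag : ∀ e : V × V, bagLabels X.E e ⊆ labelSet X.E e := by
    intro e j hj
    obtain ⟨e', hchain, hlab⟩ := hj
    suffices h : labelSet X.E e' ⊆ labelSet X.E e from h hlab
    clear hlab
    induction hchain with
    | refl => exact fun _ h => h
    | tail hab hbc ih =>
      obtain ⟨-, -, -, -, x, hx⟩ := hbc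
      intro y hy
      have hyx : y = x := hsub _ hy hx.2
      rw [hyx]
      exact ih hx.1
  have hsup : X.E.sup (fun e => (bagLabels X.E e).ncard) ≤ 1 := by
    apply Finset.sup_le
    intro e _
    have hss : (bagLabels X.E e).Subsingleton := (hsub e).anti (hbag e)
    rcases hss.eq_empty_or_singleton with h | ⟨a, h⟩
    · rw [h]; simp
    · rw [h]; simp
  unfold widthX
  omega
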